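/- Let ε ∈ ℂ be such that the quartic q = x⁴ + ε·x³y + y⁴ ∈ ℂ[x,y] is squarefree. Then there exist a ∈ ℂ and a ℂ-algebra automorphism φ of the polynomial ring ℂ[x,y] such that φ(q) = x⁴ + a·x²y² + y⁴. -/

import Mathlib

open MvPolynomial

/-! ### Linear substitution automorphisms of `ℂ[x,y]` -/

noncomputable def linSub (a b c d : ℂ) : MvPolynomial (Fin 2) ℂ →ₐ[ℂ] MvPolynomial (Fin 2) ℂ :=
  aeval ![C a * X 0 + C b * X 1, C c * X 0 + C d * X 1]

lemma linSub_X0 (a b c d : ℂ) : linSub a b c d (X 0) = C a * X 0 + C b * X 1 := by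
  simp [linSub]

lemma linSub_X1 (a b c d : ℂ) : linSub a b c d (X 1) = C c * X 0 + C d * X 1 := by
  simp [linSub]

lemma linSub_C (a b c d x : ℂ) : linSub a b c d (C x) = C x := by
  simp [linSub, algebraMap_eq]

lemma linSub_comp (a b c d a' b' c' d' : ℂ) :
    (linSub a b c d).comp (linSub a' b' c' d')
      = linSub (a'*a + b'*c) (a'*b + b'*d) (c'*a + d'*c) (c'*b + d'*d) := by
  apply MvPolynomial.algHom_ext
  intro i
  fin_cases i <;>
    simp only [Fin.mk_zero, Fin.mk_one, AlgHom.coe_comp, Function.comp_apply,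
      linSub_X0, linSub_X1, linSub_C, map_add, map_mul, C_add, C_mul] <;>
    ring

lemma linSub_id : linSub 1 0 0 1 = AlgHom.id ℂ (MvPolynomial (Fin 2) ℂ) := by
  apply MvPolynomial.algHom_ext
  intro i
  fin_cases i <;> simp [linSub_X0, linSub_X1]

noncomputable def linEquiv (a b c d : ℂ) (h : a * d - b * c ≠ 0) :
    MvPolynomial (Fin 2) ℂ ≃ₐ[ℂ] MvPolynomial (Fin 2) ℂ := by
  refine AlgEquiv.ofAlgHom (linSub a b c d)
    (linSub (d / (a*d - b*c)) (-b / (a*d - b*c)) (-c / (a*d - b*c)) (a / (a*d - b*c))) ?_ ?_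
  · rw [linSub_comp,
      show d / (a*d-b*c) * a + (-b/(a*d-b*c)) * c = 1 by
        rw [div_mul_eq_mul_div, div_mul_eq_mul_div, ← add_div, div_eq_one_iff_eq h]; ring,
      show d / (a*d-b*c) * b + (-b/(a*d-b*c)) * d = 0 by field_simp <;> ring,
      show (-c/(a*d-b*c)) * a + a/(a*d-b*c) * c = 0 by field_simp <;> ring,
      show (-c/(a*d-b*c)) * b + a/(a*d-b*c) * d = 1 by
        rw [div_mul_eq_mul_div, div_mul_eq_mul_div, ← add_div, div_eq_one_iff_eq h]; ring, linSub_id]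
  · rw [linSub_comp,
      show a * (d/(a*d-b*c)) + b * (-c/(a*d-b*c)) = 1 by field_simp <;> ring,
      show a * (-b/(a*d-b*c)) + b * (a/(a*d-b*c)) = 0 by field_simp <;> ring,
      show c * (d/(a*d-b*c)) + d * (-c/(a*d-b*c)) = 0 by field_simp <;> ring,
      show c * (-b/(a*d-b*c)) + d * (a/(a*d-b*c)) = 1 by
        rw [mul_div_assoc', mul_div_assoc', ← add_div, div_eq_one_iff_eq h]; ring, linSub_id]

lemma linEquiv_apply (a b c d : ℂ) (h : a * d - b * c ≠ 0) (p : MvPolynomial (Fin 2) ℂ) :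
    linEquiv a b c d h p = linSub a b c d p := rfl

lemma linSub_lin (a b c d r : ℂ) :
    linSub a b c d (X 0 - C r * X 1) = C (a - r*c) * X 0 + C (b - r*d) * X 1 := by
  rw [map_sub, map_mul, linSub_X0, linSub_X1, linSub_C]
  simp only [C_sub, C_mul]
  ring

/-! ### Roots of the dehomogenized quartic -/

lemma exists_roots (ε : ℂ) : ∃ r1 r2 r3 r4 : ℂ,
    r1 + r2 + r3 + r4 = -ε ∧
    r1*r2 + r1*r3 + r1*r4 + r2*r3 + r2*r4 + r3*r4 = 0 ∧
    r1*r2*r3 + r1*r2*r4 + r1*r3*r4 + r2*r3*r4 = 0 ∧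
    r1*r2*r3*r4 = 1 := by
  classical
  set P : Polynomial ℂ := Polynomial.X^4 + Polynomial.C ε * Polynomial.X^3 + 1 with hPdef
  have hmon : P.Monic := by
    have h3 : (Polynomial.C ε * Polynomial.X^3 + 1 : Polynomial ℂ).degree < 4 := by
      apply lt_of_le_of_lt (Polynomial.degree_add_le _ _)
      simp only [max_lt_iff]
      refine ⟨lt_of_le_of_lt (Polynomial.degree_mul_le _ _) ?_,
        lt_of_le_of_lt Polynomial.degree_one_le (by norm_num)⟩
      calc (Polynomial.C ε).degree + (Polynomial.X^3 : Polynomial ℂ).degree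
          ≤ 0 + 3 := add_le_add Polynomial.degree_C_le (Polynomial.degree_X_pow_le 3)
        _ < 4 := by norm_num
    simpa [hPdef, add_assoc] using Polynomial.monic_X_pow_add h3
  have hdeg : P.natDegree = 4 := by rw [hPdef]; compute_degree!
  have hsplit : P.Splits := IsAlgClosed.splits P
  have hcard : Multiset.card P.roots = 4 := by
    have := Polynomial.Splits.natDegree_eq_card_roots hsplit
    omega
  have hfact := Polynomial.Splits.eq_prod_roots_of_monic hsplit hmon
  have hl : P.roots.toList.length = 4 := by simp [hcard]
  have hs : (P.roots.toList : Multiset ℂ) = P.roots := Multiset.coe_toList P.roots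
  match hm : P.roots.toList, hl with
  | [r1, r2, r3, r4], _ =>
    refine ⟨r1, r2, r3, r4, ?_⟩
    rw [← hs, hm] at hfact
    have h : (Polynomial.X^4 + Polynomial.C ε * Polynomial.X^3 + 1 : Polynomial ℂ)
        = (Polynomial.X - Polynomial.C r1) * ((Polynomial.X - Polynomial.C r2) *
          ((Polynomial.X - Polynomial.C r3) * ((Polynomial.X - Polynomial.C r4) * 1))) := by
      rw [← hPdef]; simpa using hfact
    rw [mul_one] at h
    have hexp : (Polynomial.X - Polynomial.C r1) * ((Polynomial.X - Polynomial.C r2) *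
          ((Polynomial.X - Polynomial.C r3) * (Polynomial.X - Polynomial.C r4)))
        = Polynomial.X^4 - Polynomial.C (r1 + r2 + r3 + r4) * Polynomial.X^3
          + Polynomial.C (r1*r2 + r1*r3 + r1*r4 + r2*r3 + r2*r4 + r3*r4) * Polynomial.X^2
          - Polynomial.C (r1*r2*r3 + r1*r2*r4 + r1*r3*r4 + r2*r3*r4) * Polynomial.X
          + Polynomial.C (r1*r2*r3*r4) := by
      simp only [map_add, map_mul]
      ring
    rw [hexp] at h
    have hc := fun n => congrArg (fun p => Polynomial.coeff p n) h
    simp only [Polynomial.coeff_add, Polynomial.coeff_sub, Polynomial.coeff_C_mul,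
      Polynomial.coeff_X_pow, Polynomial.coeff_one, Polynomial.coeff_C, Polynomial.coeff_X] at hc
    have h0 := hc 0
    have h1 := hc 1
    have h2 := hc 2
    have h3 := hc 3
    norm_num at h0 h1 h2 h3
    exact ⟨by linear_combination h3, by linear_combination -h2,
      by linear_combination h1, by linear_combination -h0⟩

/-! ### The auxiliary scalar lemmas -/

lemma aux_ne (r1 r2 r3 r4 A B : ℂ) (h12 : r1 ≠ r2) (h13 : r1 ≠ r3) (h14 : r1 ≠ r4)
    (E12 : (r1-A)*(r2-B) + (r2-A)*(r1-B) = 0)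
    (E34 : (r3-A)*(r4-B) + (r4-A)*(r3-B) = 0) : r1 ≠ B := by
  intro hB
  have hB' : B = r1 := hB.symm
  rw [hB'] at E12 E34
  have h1 : (r1 - A)*(r2 - r1) = 0 := by linear_combination E12
  rcases mul_eq_zero.mp h1 with h | h
  · have hA : A = r1 := by linear_combination -h
    rw [hA] at E34
    have h2 : (r3 - r1)*(r4 - r1) = 0 := by linear_combination E34 / 2
    rcases mul_eq_zero.mp h2 with h' | h'
    · exact h13 (sub_eq_zero.mp h').symm
    · exact h14 (sub_eq_zero.mp h').symm
  · exact h12 (sub_eq_zero.mp h).symm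

lemma key_scalars (r1 r2 r3 r4 : ℂ) (h12 : r1 ≠ r2) (h13 : r1 ≠ r3) (h14 : r1 ≠ r4)
    (h23 : r2 ≠ r3) (h24 : r2 ≠ r4) (h34 : r3 ≠ r4) :
    ∃ n m B : ℂ,
      (n*r1+m)*(r2-B) + (n*r2+m)*(r1-B) = 0 ∧
      (n*r3+m)*(r4-B) + (n*r4+m)*(r3-B) = 0 ∧
      r1 - B ≠ 0 ∧ r2 - B ≠ 0 ∧ r3 - B ≠ 0 ∧ r4 - B ≠ 0 ∧
      n*r1+m ≠ 0 ∧ n*r2+m ≠ 0 ∧ n*r3+m ≠ 0 ∧ n*r4+m ≠ 0 ∧ B*n + m ≠ 0 := by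
  by_cases hσ : r1 + r2 = r3 + r4
  · -- use h(z) = 1/(z - B), B = (r1+r2)/2
    refine ⟨0, 1, (r1 + r2)/2, by ring, by linear_combination -hσ, ?_, ?_, ?_, ?_,
      by norm_num, by norm_num, by norm_num, by norm_num, by norm_num⟩
    · intro h; apply h12; linear_combination 2*h
    · intro h; apply h12; linear_combination -2*h
    · intro h; apply h34; linear_combination 2*h + hσ
    · intro h; apply h34; linear_combination -2*h - hσ
  · -- use h(z) = (z - A)/(z - B)
    have hσ' : r1 + r2 - (r3 + r4) ≠ 0 := sub_ne_zero.mpr hσ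
    set u : ℂ := 2*(r1*r2 - r3*r4)/(r1 + r2 - (r3 + r4)) with hu_def
    have hu : u * (r1 + r2 - (r3 + r4)) = 2*(r1*r2 - r3*r4) := by
      rw [hu_def]; field_simp
    set v : ℂ := ((r1 + r2)*u - 2*(r1*r2))/2 with hv_def
    have hv : 2*v = (r1 + r2)*u - 2*(r1*r2) := by rw [hv_def]; ring
    have hfdeg : (0:WithBot ℕ) < (Polynomial.X^2 - Polynomial.C u * Polynomial.X + Polynomial.C v
        : Polynomial ℂ).degree := by
      have h1 : (Polynomial.X^2 - Polynomial.C u * Polynomial.X + Polynomial.C v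
          : Polynomial ℂ).degree = 2 := by compute_degree!
      rw [h1]; norm_num
    obtain ⟨A, hA⟩ := Complex.exists_root hfdeg
    have hA' : A^2 - u*A + v = 0 := by
      simp only [Polynomial.IsRoot, Polynomial.eval_add, Polynomial.eval_sub,
        Polynomial.eval_mul, Polynomial.eval_pow, Polynomial.eval_X, Polynomial.eval_C] at hA
      linear_combination hA
    set B : ℂ := u - A with hB_def
    have E12 : (r1-A)*(r2-B) + (r2-A)*(r1-B) = 0 := by
      rw [hB_def]; linear_combination (-2)*hA' + hv
    have E34 : (r3-A)*(r4-B) + (r4-A)*(r3-B) = 0 := by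
      rw [hB_def]; linear_combination (-2)*hA' + hv + hu
    have hB1 : r1 ≠ B := aux_ne r1 r2 r3 r4 A B h12 h13 h14 E12 E34
    have hB2 : r2 ≠ B := aux_ne r2 r1 r3 r4 A B h12.symm h23 h24
      (by linear_combination E12) E34
    have hB3 : r3 ≠ B := aux_ne r3 r4 r1 r2 A B h34 h13.symm h23.symm E34 E12
    have hB4 : r4 ≠ B := aux_ne r4 r3 r1 r2 A B h34.symm h14.symm h24.symm
      (by linear_combination E34) E12
    have hA1 : r1 ≠ A := aux_ne r1 r2 r3 r4 B A h12 h13 h14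
      (by linear_combination E12) (by linear_combination E34)
    have hA2 : r2 ≠ A := aux_ne r2 r1 r3 r4 B A h12.symm h23 h24
      (by linear_combination E12) (by linear_combination E34)
    have hA3 : r3 ≠ A := aux_ne r3 r4 r1 r2 B A h34 h13.symm h23.symm
      (by linear_combination E34) (by linear_combination E12)
    have hA4 : r4 ≠ A := aux_ne r4 r3 r1 r2 B A h34.symm h14.symm h24.symm
      (by linear_combination E34) (by linear_combination E12)
    have hAB : A ≠ B := by
      intro h
      rw [← h] at E12
      have h1 : (r1 - A)*(r2 - A) = 0 := by linear_combination E12 / 2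
      rcases mul_eq_zero.mp h1 with h' | h'
      · exact hA1 (sub_eq_zero.mp h')
      · exact hA2 (sub_eq_zero.mp h')
    refine ⟨1, -A, B, by linear_combination E12, by linear_combination E34,
      sub_ne_zero.mpr hB1, sub_ne_zero.mpr hB2, sub_ne_zero.mpr hB3, sub_ne_zero.mpr hB4,
      ?_, ?_, ?_, ?_, ?_⟩
    · intro h; exact hA1 (by linear_combination h)
    · intro h; exact hA2 (by linear_combination h)
    · intro h; exact hA3 (by linear_combination h)
    · intro h; exact hA4 (by linear_combination h)
    · intro h; exact hAB (by linear_combination -h)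

lemma scalar_main (r1 r2 r3 r4 : ℂ) (h12 : r1 ≠ r2) (h13 : r1 ≠ r3) (h14 : r1 ≠ r4)
    (h23 : r2 ≠ r3) (h24 : r2 ≠ r4) (h34 : r3 ≠ r4) :
    ∃ a b c d : ℂ, a*d - b*c ≠ 0
      ∧ (a - r1*c)*(a - r2*c)*(a - r3*c)*(a - r4*c) = 1
      ∧ (b - r1*d)*(b - r2*d)*(b - r3*d)*(b - r4*d) = 1
      ∧ (b - r1*d)*(a - r2*c)*(a - r3*c)*(a - r4*c) + (a - r1*c)*(b - r2*d)*(a - r3*c)*(a - r4*c)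
        + (a - r1*c)*(a - r2*c)*(b - r3*d)*(a - r4*c) + (a - r1*c)*(a - r2*c)*(a - r3*c)*(b - r4*d) = 0
      ∧ (a - r1*c)*(b - r2*d)*(b - r3*d)*(b - r4*d) + (b - r1*d)*(a - r2*c)*(b - r3*d)*(b - r4*d)
        + (b - r1*d)*(b - r2*d)*(a - r3*c)*(b - r4*d) + (b - r1*d)*(b - r2*d)*(b - r3*d)*(a - r4*c) = 0 := by
  obtain ⟨n, m, B, H12, H34, hB1, hB2, hB3, hB4, hn1, hn2, hn3, hn4, hdet⟩ :=
    key_scalars r1 r2 r3 r4 h12 h13 h14 h23 h24 h34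
  have hPi1 : (r1-B)*(r2-B)*(r3-B)*(r4-B) ≠ 0 :=
    mul_ne_zero (mul_ne_zero (mul_ne_zero hB1 hB2) hB3) hB4
  have hPi2 : (n*r1+m)*(n*r2+m)*(n*r3+m)*(n*r4+m) ≠ 0 :=
    mul_ne_zero (mul_ne_zero (mul_ne_zero hn1 hn2) hn3) hn4
  obtain ⟨α, hα⟩ := IsAlgClosed.exists_pow_nat_eq (k := ℂ)
    (((r1-B)*(r2-B)*(r3-B)*(r4-B))⁻¹) (n := 4) (by norm_num)
  obtain ⟨β, hβ⟩ := IsAlgClosed.exists_pow_nat_eq (k := ℂ)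
    (((n*r1+m)*(n*r2+m)*(n*r3+m)*(n*r4+m))⁻¹) (n := 4) (by norm_num)
  have hα4 : α^4 * ((r1-B)*(r2-B)*(r3-B)*(r4-B)) = 1 := by
    rw [hα]; field_simp
  have hβ4 : β^4 * ((n*r1+m)*(n*r2+m)*(n*r3+m)*(n*r4+m)) = 1 := by
    rw [hβ]; field_simp
  have hα0 : α ≠ 0 := by
    intro h; rw [h] at hα4; simp at hα4
  have hβ0 : β ≠ 0 := by
    intro h; rw [h] at hβ4; simp at hβ4
  refine ⟨-B*α, -m*β, -α, n*β, ?_, ?_, ?_, ?_, ?_⟩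
  · intro h
    apply hdet
    have h2 : α * β * (B*n + m) = 0 := by linear_combination -h
    rcases mul_eq_zero.mp h2 with h' | h'
    · rcases mul_eq_zero.mp h' with h'' | h''
      · exact (hα0 h'').elim
      · exact (hβ0 h'').elim
    · exact h'
  · linear_combination hα4
  · linear_combination hβ4
  · linear_combination (-(α^3*β)*(r3-B)*(r4-B)) * H12 + (-(α^3*β)*(r1-B)*(r2-B)) * H34
  · linear_combination (-(α*β^3)*(n*r3+m)*(n*r4+m)) * H12 + (-(α*β^3)*(n*r1+m)*(n*r2+m)) * H34

/-! ### Distinctness of roots from squarefreeness -/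

lemma roots_ne (s t : ℂ) (g : MvPolynomial (Fin 2) ℂ)
    (hsq : Squarefree (X 0 ^ 4 + C ε * X 0 ^ 3 * X 1 + X 1 ^ 4 : MvPolynomial (Fin 2) ℂ))
    (hQ : (X 0 ^ 4 + C ε * X 0 ^ 3 * X 1 + X 1 ^ 4 : MvPolynomial (Fin 2) ℂ)
      = (X 0 - C s * X 1) * (X 0 - C t * X 1) * g) : s ≠ t := by
  intro h
  subst h
  have hdvd : (X 0 - C s * X 1) * (X 0 - C s * X 1)
      ∣ (X 0 ^ 4 + C ε * X 0 ^ 3 * X 1 + X 1 ^ 4 : MvPolynomial (Fin 2) ℂ) :=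
    ⟨g, hQ⟩
  have hunit := hsq _ hdvd
  have := hunit.map (MvPolynomial.eval ![s, 1])
  simp [MvPolynomial.eval_X] at this

/-- Example 2.14: a squarefree member `x⁴ + ε x³y + y⁴` of the μ-constant stratum
of `X₉` is right-equivalent to a normal form equation `x⁴ + a x²y² + y⁴`. -/
theorem X9_member_equivalent_to_normal_form (ε : ℂ)
    (hsq : Squarefree (X 0 ^ 4 + C ε * X 0 ^ 3 * X 1 + X 1 ^ 4 : MvPolynomial (Fin 2) ℂ)) :
    ∃ (a : ℂ) (φ : MvPolynomial (Fin 2) ℂ ≃ₐ[ℂ] MvPolynomial (Fin 2) ℂ),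
      φ (X 0 ^ 4 + C ε * X 0 ^ 3 * X 1 + X 1 ^ 4) =
        X 0 ^ 4 + C a * X 0 ^ 2 * X 1 ^ 2 + X 1 ^ 4 := by
  obtain ⟨r1, r2, r3, r4, he1, he2, he3, he4⟩ := exists_roots ε
  -- lift the elementary symmetric relations to `MvPolynomial`
  have l1 := congrArg (fun x : ℂ => (C x : MvPolynomial (Fin 2) ℂ)) he1
  have l2 := congrArg (fun x : ℂ => (C x : MvPolynomial (Fin 2) ℂ)) he2
  have l3 := congrArg (fun x : ℂ => (C x : MvPolynomial (Fin 2) ℂ)) he3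
  have l4 := congrArg (fun x : ℂ => (C x : MvPolynomial (Fin 2) ℂ)) he4
  simp only [map_add, map_mul, map_neg, map_one, map_zero] at l1 l2 l3 l4
  have hQ : (X 0 ^ 4 + C ε * X 0 ^ 3 * X 1 + X 1 ^ 4 : MvPolynomial (Fin 2) ℂ)
      = (X 0 - C r1 * X 1) * (X 0 - C r2 * X 1) * (X 0 - C r3 * X 1) * (X 0 - C r4 * X 1) := by
    linear_combination (X 0^3 * X 1) * l1 + (-(X 0^2 * X 1^2)) * l2
      + (X 0 * X 1^3) * l3 + (-(X 1^4:MvPolynomial (Fin 2) ℂ)) * l4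
  -- the roots are pairwise distinct
  have h12 : r1 ≠ r2 := roots_ne r1 r2 ((X 0 - C r3 * X 1) * (X 0 - C r4 * X 1)) hsq
    (by rw [hQ]; ring)
  have h13 : r1 ≠ r3 := roots_ne r1 r3 ((X 0 - C r2 * X 1) * (X 0 - C r4 * X 1)) hsq
    (by rw [hQ]; ring)
  have h14 : r1 ≠ r4 := roots_ne r1 r4 ((X 0 - C r2 * X 1) * (X 0 - C r3 * X 1)) hsq
    (by rw [hQ]; ring)
  have h23 : r2 ≠ r3 := roots_ne r2 r3 ((X 0 - C r1 * X 1) * (X 0 - C r4 * X 1)) hsq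
    (by rw [hQ]; ring)
  have h24 : r2 ≠ r4 := roots_ne r2 r4 ((X 0 - C r1 * X 1) * (X 0 - C r3 * X 1)) hsq
    (by rw [hQ]; ring)
  have h34 : r3 ≠ r4 := roots_ne r3 r4 ((X 0 - C r1 * X 1) * (X 0 - C r2 * X 1)) hsq
    (by rw [hQ]; ring)
  obtain ⟨a, b, c, d, hdet, F1, F2, F3, F4⟩ := scalar_main r1 r2 r3 r4 h12 h13 h14 h23 h24 h34
  have F1C := congrArg (fun x : ℂ => (C x : MvPolynomial (Fin 2) ℂ)) F1
  have F2C := congrArg (fun x : ℂ => (C x : MvPolynomial (Fin 2) ℂ)) F2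
  have F3C := congrArg (fun x : ℂ => (C x : MvPolynomial (Fin 2) ℂ)) F3
  have F4C := congrArg (fun x : ℂ => (C x : MvPolynomial (Fin 2) ℂ)) F4
  simp only [map_add, map_mul, map_sub, map_one, map_zero] at F1C F2C F3C F4C
  refine ⟨(b - r1*d)*(b - r2*d)*(a - r3*c)*(a - r4*c) + (b - r1*d)*(a - r2*c)*(b - r3*d)*(a - r4*c)
      + (b - r1*d)*(a - r2*c)*(a - r3*c)*(b - r4*d) + (a - r1*c)*(b - r2*d)*(b - r3*d)*(a - r4*c)
      + (a - r1*c)*(b - r2*d)*(a - r3*c)*(b - r4*d) + (a - r1*c)*(a - r2*c)*(b - r3*d)*(b - r4*d),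
    linEquiv a b c d hdet, ?_⟩
  rw [hQ, linEquiv_apply, map_mul, map_mul, map_mul, linSub_lin, linSub_lin, linSub_lin,
    linSub_lin]
  simp only [map_add, map_mul, map_sub, map_one, map_zero]
  linear_combination F1C * (X 0:MvPolynomial (Fin 2) ℂ)^4 + F3C * ((X 0:MvPolynomial (Fin 2) ℂ)^3 * X 1)
    + F4C * ((X 0:MvPolynomial (Fin 2) ℂ) * (X 1)^3) + F2C * ((X 1:MvPolynomial (Fin 2) ℂ))^4
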